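/- Fix an integer g ≥ 2. Then lim_{r→∞} Σ_{u=1}^{r-1} (sin(uπ/r)/sin(π/r))^{-(2g-2)} = 2·ζ(2g-2), where ζ is the Riemann zeta function. -/

import Mathlib

open Real Filter Topology

lemma my_tendsto_sin_div : Tendsto (fun x : ℝ => sin x / x) (𝓝[≠] 0) (𝓝 1) := by
  have h : HasDerivAt sin (cos 0) 0 := Real.hasDerivAt_sin 0
  rw [hasDerivAt_iff_tendsto_slope] at h
  simp only [Real.cos_zero] at h
  refine h.congr fun x => ?_
  simp [slope_fun_def_field]

lemma my_ratio_tendsto (u : ℕ) (hu : 1 ≤ u) :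
    Tendsto (fun r : ℕ => sin (u * π / r) / sin (π / r)) atTop (𝓝 u) := by
  have hu0 : (0:ℝ) < u := by exact_mod_cast hu
  have hpi : Tendsto (fun r : ℕ => π / r) atTop (𝓝[≠] 0) := by
    refine tendsto_nhdsWithin_of_tendsto_nhds_of_eventually_within _
      (tendsto_const_div_atTop_nhds_zero_nat π) ?_
    filter_upwards [eventually_ge_atTop 1] with r hr
    have hr0 : (0:ℝ) < r := by exact_mod_cast hr
    simpa using (div_pos pi_pos hr0).ne'
  have hupi : Tendsto (fun r : ℕ => (u:ℝ) * π / r) atTop (𝓝[≠] 0) := by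
    refine tendsto_nhdsWithin_of_tendsto_nhds_of_eventually_within _ ?_ ?_
    · simpa [mul_div_assoc] using
        (tendsto_const_div_atTop_nhds_zero_nat π).const_mul (u:ℝ) |>.congr (fun r => by ring) |>.mono_right (by simp [mul_zero])
    · filter_upwards [eventually_ge_atTop 1] with r hr
      have hr0 : (0:ℝ) < r := by exact_mod_cast hr
      have : (0:ℝ) < (u:ℝ) * π / r := by positivity
      simpa using this.ne'
  have h1 : Tendsto (fun r : ℕ => sin ((u:ℝ) * π / r) / ((u:ℝ) * π / r)) atTop (𝓝 1) :=
    my_tendsto_sin_div.comp hupi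
  have h2 : Tendsto (fun r : ℕ => sin (π / r) / (π / r)) atTop (𝓝 1) :=
    my_tendsto_sin_div.comp hpi
  have key : Tendsto (fun r : ℕ =>
      (sin ((u:ℝ) * π / r) / ((u:ℝ) * π / r)) / (sin (π / r) / (π / r)) * u)
      atTop (𝓝 ((1 / 1) * u)) := (h1.div h2 one_ne_zero).mul_const _
  rw [show (1:ℝ)/1 * u = u by norm_num] at key
  refine key.congr' ?_
  filter_upwards [eventually_gt_atTop u] with r hr
  have hr1 : (1:ℝ) < r := by exact_mod_cast lt_of_le_of_lt hu hr
  have hr0 : (0:ℝ) < r := by linarith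
  have hb : (0:ℝ) < π / r := by positivity
  have hB : 0 < sin (π / r) := sin_pos_of_pos_of_lt_pi hb (div_lt_self pi_pos hr1)
  field_simp

lemma my_ratio_lower (r u : ℕ) (hr : 2 ≤ r) (hu : 1 ≤ u) (hu2 : 2 * u ≤ r) :
    2 * u / π ≤ sin (u * π / r) / sin (π / r) := by
  have hr0 : (0:ℝ) < r := by positivity
  have hu0 : (0:ℝ) < u := by exact_mod_cast hu
  have hb : (0:ℝ) < π / r := by positivity
  have hr1 : (1:ℝ) < r := by exact_mod_cast lt_of_lt_of_le one_lt_two hr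
  have hB : 0 < sin (π / r) := sin_pos_of_pos_of_lt_pi hb (div_lt_self pi_pos hr1)
  have hBle : sin (π / r) ≤ π / r := Real.sin_le hb.le
  have hux : (u:ℝ) * π / r ≤ π / 2 := by
    rw [div_le_div_iff₀ hr0 two_pos]
    have : (2:ℝ) * u ≤ r := by exact_mod_cast hu2
    nlinarith [pi_pos]
  have hA : 2 / π * ((u:ℝ) * π / r) ≤ sin ((u:ℝ) * π / r) :=
    Real.mul_le_sin (by positivity) hux
  calc 2 * (u:ℝ) / π = (2 / π * ((u:ℝ) * π / r)) / (π / r) := by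
        field_simp
    _ ≤ sin ((u:ℝ) * π / r) / (π / r) := by gcongr
    _ ≤ sin ((u:ℝ) * π / r) / sin (π / r) := by
        gcongr
        exact le_trans (by positivity) hA

lemma my_f_bound (n r u : ℕ) (hr : 2 ≤ r) (hu : 1 ≤ u) (hu2 : 2 * u ≤ r) :
    |(sin (u * π / r) / sin (π / r)) ^ (-(n:ℤ))| ≤ (π/2)^n * (1/(u:ℝ))^n := by
  have hu0 : (0:ℝ) < u := by exact_mod_cast hu
  have hlow : 2 * (u:ℝ) / π ≤ sin (u * π / r) / sin (π / r) := my_ratio_lower r u hr hu hu2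
  have hlow0 : (0:ℝ) < 2 * (u:ℝ) / π := by positivity
  have hx0 : (0:ℝ) < sin (u * π / r) / sin (π / r) := lt_of_lt_of_le hlow0 hlow
  rw [zpow_neg, zpow_natCast, abs_inv, abs_of_pos (pow_pos hx0 n)]
  rw [show (π/2)^n * (1/(u:ℝ))^n = ((2 * (u:ℝ) / π)^n)⁻¹ by
    rw [← mul_pow, ← inv_pow]; congr 1; field_simp]
  exact inv_anti₀ (pow_pos hlow0 n) (by gcongr)

lemma my_sum_split (r : ℕ) (hr : 2 ≤ r) (f : ℕ → ℝ)
    (hsym : ∀ u, r/2 < u → u ≤ r - 1 → f u = f (r - u)) :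
    ∑ u ∈ Finset.Icc 1 (r - 1), f u
      = (∑ k ∈ Finset.range (r / 2), f (k + 1))
        + (∑ k ∈ Finset.range (r - 1 - r / 2), f (k + 1)) := by
  have h0 : Finset.Icc 1 (r-1) = Finset.Ioc 0 (r-1) := by
    ext x; simp only [Finset.mem_Icc, Finset.mem_Ioc]; omega
  rw [h0, ← Finset.sum_Ioc_consecutive f (Nat.zero_le (r/2)) (by omega : r/2 ≤ r-1)]
  congr 1
  · refine Finset.sum_nbij' (fun u => u - 1) (fun k => k + 1) ?_ ?_ ?_ ?_ ?_ <;>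
      intro a ha <;>
      simp only [Finset.mem_Ioc, Finset.mem_range] at ha ⊢
    · omega
    · omega
    · omega
    · omega
    · rw [Nat.sub_add_cancel ha.1]
  · refine Finset.sum_nbij' (fun u => r - u - 1) (fun k => r - (k + 1)) ?_ ?_ ?_ ?_ ?_ <;>
      intro a ha <;>
      simp only [Finset.mem_Ioc, Finset.mem_range] at ha ⊢
    · omega
    · omega
    · omega
    · omega
    · rw [show r - a - 1 + 1 = r - a by omega]
      exact hsym a ha.1 ha.2


theorem root_of_unity_yang_mills_limit (g : ℕ) (hg : 2 ≤ g) :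
    Tendsto
      (fun r : ℕ =>
        ((∑ u ∈ Finset.Icc 1 (r - 1),
            (sin (u * π / r) / sin (π / r)) ^ (-(2 * (g : ℤ) - 2)) : ℝ) : ℂ))
      atTop (𝓝 (2 * riemannZeta (2 * g - 2))) := by
  set n : ℕ := 2 * g - 2 with hn
  have hn2 : 2 ≤ n := by omega
  have hcastn : ((n : ℤ)) = 2 * (g : ℤ) - 2 := by
    rw [hn]; push_cast [Nat.cast_sub (by omega : 2 ≤ 2 * g)]; ring
  have hexp : ∀ x : ℝ, x ^ (-(2 * (g:ℤ) - 2)) = x ^ (-(n:ℤ)) := by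
    intro x; rw [hcastn]
  set f : ℕ → ℕ → ℝ := fun r u => (sin (u * π / r) / sin (π / r)) ^ (-(n:ℤ)) with hf
  set L : ℝ := ∑' k : ℕ, ((k:ℝ) + 1) ^ (-(n:ℤ)) with hL
  -- summable bound
  have hbsum : Summable (fun k : ℕ => (π/2)^n * (1/((k:ℝ)+1))^n) := by
    have h1 : Summable (fun k : ℕ => 1/(k:ℝ)^n) :=
      summable_one_div_nat_pow.mpr (by omega)
    have h2 : Summable (fun k : ℕ => 1/(((k:ℕ):ℝ)+1)^n) := by
      have := (summable_nat_add_iff (f := fun k : ℕ => 1/(k:ℝ)^n) 1).mpr h1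
      refine this.congr fun k => ?_
      push_cast; ring
    refine (h2.mul_left ((π/2)^n)).congr fun k => ?_
    simp [inv_pow]
  -- pointwise limits
  have hterm : ∀ k : ℕ, Tendsto (fun r : ℕ => f r (k+1)) atTop
      (𝓝 (((k:ℝ) + 1) ^ (-(n:ℤ)))) := by
    intro k
    have h := my_ratio_tendsto (k+1) (by omega)
    have hc : ContinuousAt (fun x : ℝ => x ^ (-(n:ℤ))) (((k+1:ℕ)):ℝ) :=
      continuousAt_zpow₀ _ _ (Or.inl (by positivity))
    have := hc.tendsto.comp h
    simp only [hf, Function.comp_def] at this ⊢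
    convert this using 2 <;> push_cast <;> ring
  -- the two indicator families
  set F : ℕ → ℕ → ℝ := fun r k => if k + 1 ≤ r / 2 then f r (k+1) else 0 with hF
  set G : ℕ → ℕ → ℝ := fun r k => if k + 1 ≤ r - 1 - r / 2 then f r (k+1) else 0 with hG
  have hFlim : ∀ k, Tendsto (fun r => F r k) atTop (𝓝 (((k:ℝ) + 1) ^ (-(n:ℤ)))) := by
    intro k
    refine (hterm k).congr' ?_
    filter_upwards [eventually_ge_atTop (2*(k+1))] with r hr
    simp only [hF]
    rw [if_pos (by omega)]
  have hGlim : ∀ k, Tendsto (fun r => G r k) atTop (𝓝 (((k:ℝ) + 1) ^ (-(n:ℤ)))) := by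
    intro k
    refine (hterm k).congr' ?_
    filter_upwards [eventually_ge_atTop (2*k+4)] with r hr
    simp only [hG]
    rw [if_pos (by omega)]
  have hkey : ∀ (r k : ℕ), 2 ≤ r → k + 1 ≤ r / 2 →
      ‖f r (k+1)‖ ≤ (π/2)^n * (1/((k:ℝ)+1))^n := by
    intro r k hr hk
    have := my_f_bound n r (k+1) hr (by omega) (by omega)
    rw [Real.norm_eq_abs]
    refine le_trans this (le_of_eq ?_)
    push_cast
    ring
  have hFbdd : ∀ᶠ r in atTop, ∀ k, ‖F r k‖ ≤ (π/2)^n * (1/((k:ℝ)+1))^n := by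
    filter_upwards [eventually_ge_atTop 2] with r hr k
    simp only [hF]
    by_cases h : k + 1 ≤ r / 2
    · rw [if_pos h]; exact hkey r k hr h
    · rw [if_neg h]; simp; positivity
  have hGbdd : ∀ᶠ r in atTop, ∀ k, ‖G r k‖ ≤ (π/2)^n * (1/((k:ℝ)+1))^n := by
    filter_upwards [eventually_ge_atTop 2] with r hr k
    simp only [hG]
    by_cases h : k + 1 ≤ r - 1 - r / 2
    · rw [if_pos h]; exact hkey r k hr (by omega)
    · rw [if_neg h]; simp; positivity
  have hFt : Tendsto (fun r => ∑' k, F r k) atTop (𝓝 L) :=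
    tendsto_tsum_of_dominated_convergence hbsum hFlim hFbdd
  have hGt : Tendsto (fun r => ∑' k, G r k) atTop (𝓝 L) :=
    tendsto_tsum_of_dominated_convergence hbsum hGlim hGbdd
  have hreal : Tendsto (fun r : ℕ => ∑ u ∈ Finset.Icc 1 (r - 1), f r u)
      atTop (𝓝 (L + L)) := by
    refine (hFt.add hGt).congr' ?_
    filter_upwards [eventually_ge_atTop 2] with r hr
    have h1 : ∑' k, F r k = ∑ k ∈ Finset.range (r/2), f r (k+1) := by
      rw [tsum_eq_sum (s := Finset.range (r/2)) (fun k hk => by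
        simp only [Finset.mem_range, not_lt] at hk
        simp only [hF]; rw [if_neg (by omega)])]
      refine Finset.sum_congr rfl fun k hk => ?_
      simp only [Finset.mem_range] at hk
      simp only [hF]; rw [if_pos (by omega)]
    have h2 : ∑' k, G r k = ∑ k ∈ Finset.range (r - 1 - r/2), f r (k+1) := by
      rw [tsum_eq_sum (s := Finset.range (r - 1 - r/2)) (fun k hk => by
        simp only [Finset.mem_range, not_lt] at hk
        simp only [hG]; rw [if_neg (by omega)])]
      refine Finset.sum_congr rfl fun k hk => ?_
      simp only [Finset.mem_range] at hk
      simp only [hG]; rw [if_pos (by omega)]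
    have hsym : ∀ u, r/2 < u → u ≤ r - 1 → f r u = f r (r - u) := by
      intro u h1u h2u
      have hr0 : ((r:ℝ)) ≠ 0 := by positivity
      have hcast : (((r - u : ℕ)):ℝ) = (r:ℝ) - u := by
        rw [Nat.cast_sub (by omega)]
      simp only [hf, hcast]
      rw [show ((r:ℝ) - u) * π / r = π - u * π / r by field_simp,
        Real.sin_pi_sub]
    rw [h1, h2, my_sum_split r hr (f r) hsym]
  -- transfer to ℂ
  have hs : (2 * (g:ℂ) - 2) = ((n:ℕ) : ℂ) := by
    rw [hn]; push_cast [Nat.cast_sub (by omega : 2 ≤ 2 * g)]; ring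
  have hLC : ((L:ℝ) : ℂ) = ∑' k : ℕ, 1 / ((k:ℂ) + 1) ^ (n:ℕ) := by
    rw [hL, Complex.ofReal_tsum]
    refine tsum_congr fun k => ?_
    push_cast
    rw [zpow_neg, zpow_natCast, one_div]
  have hzeta : 2 * riemannZeta (2 * (g:ℂ) - 2) = ((L + L : ℝ) : ℂ) := by
    rw [hs, zeta_eq_tsum_one_div_nat_add_one_cpow
      (by rw [Complex.natCast_re]; exact_mod_cast (by omega : 1 < n))]
    rw [two_mul, Complex.ofReal_add, hLC]
    congr 1 <;> exact tsum_congr fun k => by rw [Complex.cpow_natCast]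
  rw [show (2 : ℂ) * riemannZeta (2 * (g:ℂ) - 2) = ((L + L : ℝ) : ℂ) from hzeta]
  have := (Complex.continuous_ofReal.tendsto (L + L)).comp hreal
  refine this.congr fun r => ?_
  simp only [Function.comp]
  exact congrArg Complex.ofReal
    (Finset.sum_congr rfl fun u hu => (hexp _).symm)
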